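/- For all i, j ∈ {1,2} and all nonnegative integers m, n, k, l, the Lie bracket of the rotational vector fields vanishes: [Θ^i_{m,n}, Θ^j_{k,l}] = 0 as a map ℝ⁴ → ℝ⁴. -/

import Mathlib

/-- Lie bracket of vector fields on ℝ⁴: [V,W](x) = DV(x)(W(x)) − DW(x)(V(x)). -/
noncomputable def bracket (V W : (Fin 4 → ℝ) → (Fin 4 → ℝ)) : (Fin 4 → ℝ) → (Fin 4 → ℝ) :=
  fun x => fderiv ℝ V x (W x) - fderiv ℝ W x (V x)

/-- The Eulerian vector field E₀₀(x) = x. -/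
def E00 : (Fin 4 → ℝ) → (Fin 4 → ℝ) := fun x => x

/-- The rotational vector fields Θ¹₀₀(x) = (−y₁, x₁, 0, 0) and Θ²₀₀(x) = (0, 0, −y₂, x₂). -/
def Theta0 (i : Fin 2) : (Fin 4 → ℝ) → (Fin 4 → ℝ) :=
  if i = 0 then (fun x => ![-(x 1), x 0, 0, 0]) else (fun x => ![0, 0, -(x 3), x 2])

/-- Z_{m,n}(x) = (x₁² + y₁²)^m (x₂² + y₂²)^n. -/
def Z (m n : ℕ) : (Fin 4 → ℝ) → ℝ :=
  fun x => ((x 0) ^ 2 + (x 1) ^ 2) ^ m * ((x 2) ^ 2 + (x 3) ^ 2) ^ n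

/-- E_{m,n} = Z_{m,n} · E₀₀. -/
def Emn (m n : ℕ) : (Fin 4 → ℝ) → (Fin 4 → ℝ) := fun x => Z m n x • E00 x

/-- Θ^i_{m,n} = Z_{m,n} · Θ^i₀₀. -/
def Thmn (i : Fin 2) (m n : ℕ) : (Fin 4 → ℝ) → (Fin 4 → ℝ) := fun x => Z m n x • Theta0 i x

open ContinuousLinearMap in
/-- The rotations as continuous linear maps. -/
noncomputable def Trot : Fin 2 → ((Fin 4 → ℝ) →L[ℝ] (Fin 4 → ℝ)) := fun i =>
  if i = 0 then pi ![-(proj 1), proj 0, 0, 0]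
  else pi ![0, 0, -(proj 3), proj 2]

lemma Trot_apply (i : Fin 2) (x : Fin 4 → ℝ) : Trot i x = Theta0 i x := by
  fin_cases i <;> funext p <;> fin_cases p <;>
    simp [Trot, Theta0, ContinuousLinearMap.pi_apply]

lemma Trot_comm (i j : Fin 2) (x : Fin 4 → ℝ) : Trot i (Trot j x) = Trot j (Trot i x) := by
  fin_cases i <;> fin_cases j <;> funext p <;> fin_cases p <;>
    simp [Trot, ContinuousLinearMap.pi_apply]

lemma hZderiv (m n : ℕ) (x : Fin 4 → ℝ) :
    ∃ L : (Fin 4 → ℝ) →L[ℝ] ℝ, HasFDerivAt (Z m n) L x ∧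
      ∀ j, L (Theta0 j x) = 0 := by
  have h0 := hasFDerivAt_apply (𝕜 := ℝ) (0 : Fin 4) x
  have h1 := hasFDerivAt_apply (𝕜 := ℝ) (1 : Fin 4) x
  have h2 := hasFDerivAt_apply (𝕜 := ℝ) (2 : Fin 4) x
  have h3 := hasFDerivAt_apply (𝕜 := ℝ) (3 : Fin 4) x
  have hr1 := ((hasDerivAt_pow 2 (x 0)).comp_hasFDerivAt x h0).add
    ((hasDerivAt_pow 2 (x 1)).comp_hasFDerivAt x h1)
  have hr2 := ((hasDerivAt_pow 2 (x 2)).comp_hasFDerivAt x h2).add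
    ((hasDerivAt_pow 2 (x 3)).comp_hasFDerivAt x h3)
  have hp1 := (hasDerivAt_pow m ((x 0) ^ 2 + (x 1) ^ 2)).comp_hasFDerivAt x hr1
  have hp2 := (hasDerivAt_pow n ((x 2) ^ 2 + (x 3) ^ 2)).comp_hasFDerivAt x hr2
  have hZ := hp1.mul hp2
  refine ⟨_, hZ, ?_⟩
  intro j
  fin_cases j <;>
    simp [Theta0, ContinuousLinearMap.add_apply, ContinuousLinearMap.smul_apply,
      ContinuousLinearMap.proj_apply] <;> ring

lemma hThderiv (i : Fin 2) (m n : ℕ) (x : Fin 4 → ℝ)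
    {L : (Fin 4 → ℝ) →L[ℝ] ℝ} (hL : HasFDerivAt (Z m n) L x) :
    HasFDerivAt (Thmn i m n) (Z m n x • Trot i + L.smulRight (Trot i x)) x := by
  have h := hL.smul (Trot i).hasFDerivAt
  have : (fun y => Z m n y • Trot i y) = Thmn i m n := by
    funext y; simp [Thmn, Trot_apply]
  rw [← this]; exact h

/-- [Θ^i_{m,n}, Θ^j_{k,l}] = 0. -/
theorem bracket_Thmn_Thmn (i j : Fin 2) (m n k l : ℕ) :
    bracket (Thmn i m n) (Thmn j k l) = 0 := by
  funext x
  obtain ⟨L1, hL1, hL1z⟩ := hZderiv m n x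
  obtain ⟨L2, hL2, hL2z⟩ := hZderiv k l x
  have hV := hThderiv i m n x hL1
  have hW := hThderiv j k l x hL2
  have eV := hV.fderiv
  have eW := hW.fderiv
  simp only [bracket, eV, eW, Pi.zero_apply]
  simp only [ContinuousLinearMap.add_apply, ContinuousLinearMap.smul_apply,
    ContinuousLinearMap.smulRight_apply, Thmn]
  have e1 : L1 (Trot j x) = 0 := by rw [Trot_apply]; exact hL1z j
  have e2 : L2 (Trot i x) = 0 := by rw [Trot_apply]; exact hL2z i
  simp only [← Trot_apply]
  rw [(Trot i).map_smul, (Trot j).map_smul, L1.map_smul, L2.map_smul,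
    e1, e2, Trot_comm i j]
  simp [smul_smul, mul_comm]
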